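/- Define F(x,y,z) = ((1+z)^{1+y} (1-z)^{1-y}) / ((1+x)^{1+y} (1-x)^{1-y}). Fix z ∈ (-1,1). Then the function x ↦ F(x,x,z) is strictly increasing on (-1,z) and strictly decreasing on (z,1). -/

import Mathlib

open Real

/-- `F(x,y,z) = ((1+z)^{1+y}(1-z)^{1-y}) / ((1+x)^{1+y}(1-x)^{1-y})`, real powers. -/
noncomputable def F (x y z : ℝ) : ℝ :=
  ((1 + z) ^ (1 + y) * (1 - z) ^ (1 - y)) / ((1 + x) ^ (1 + y) * (1 - x) ^ (1 - y))

noncomputable def Gaux (z : ℝ) : ℝ → ℝ := fun x =>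
  (1 + x) * Real.log (1 + z) + (1 - x) * Real.log (1 - z)
    - (1 + x) * Real.log (1 + x) - (1 - x) * Real.log (1 - x)

lemma Gaux_hasDerivAt (z x : ℝ) (hx : x ∈ Set.Ioo (-1 : ℝ) 1) :
    HasDerivAt (Gaux z)
      (Real.log (1 + z) - Real.log (1 - z) - Real.log (1 + x) + Real.log (1 - x)) x := by
  have h1 : (0 : ℝ) < 1 + x := by linarith [hx.1]
  have h2 : (0 : ℝ) < 1 - x := by linarith [hx.2]
  have d1 : HasDerivAt (fun x : ℝ => (1 + x) * Real.log (1 + z)) (Real.log (1 + z)) x := by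
    simpa using ((hasDerivAt_id x).const_add 1).mul_const (Real.log (1 + z))
  have d2 : HasDerivAt (fun x : ℝ => (1 - x) * Real.log (1 - z)) (-Real.log (1 - z)) x := by
    simpa using (((hasDerivAt_id x).const_sub 1)).mul_const (Real.log (1 - z))
  have d3 : HasDerivAt (fun x : ℝ => (1 + x) * Real.log (1 + x))
      (Real.log (1 + x) + 1) x := by
    have hl : HasDerivAt (fun x : ℝ => Real.log (1 + x)) (1 / (1 + x)) x := by
      simpa [Function.comp_def] using (Real.hasDerivAt_log h1.ne').comp x ((hasDerivAt_id x).const_add 1)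
    have := (((hasDerivAt_id x).const_add 1)).mul hl
    refine this.congr_deriv ?_
    simp only [id_eq]
    field_simp
  have d4 : HasDerivAt (fun x : ℝ => (1 - x) * Real.log (1 - x))
      (-Real.log (1 - x) - 1) x := by
    have hl : HasDerivAt (fun x : ℝ => Real.log (1 - x)) (-(1 / (1 - x))) x := by
      have := (Real.hasDerivAt_log h2.ne').comp x ((hasDerivAt_id x).const_sub 1)
      simpa [Function.comp_def] using this
    have := (((hasDerivAt_id x).const_sub 1)).mul hl
    refine this.congr_deriv ?_
    simp only [id_eq]
    field_simp
    ring
  have := ((d1.add d2).sub d3).sub d4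
  refine this.congr_deriv ?_
  ring

lemma F_diag_eq (z x : ℝ) (hx : x ∈ Set.Ioo (-1 : ℝ) 1) (hz : z ∈ Set.Ioo (-1 : ℝ) 1) :
    F x x z = Real.exp (Gaux z x) := by
  have h1 : (0 : ℝ) < 1 + x := by linarith [hx.1]
  have h2 : (0 : ℝ) < 1 - x := by linarith [hx.2]
  have h3 : (0 : ℝ) < 1 + z := by linarith [hz.1]
  have h4 : (0 : ℝ) < 1 - z := by linarith [hz.2]
  rw [F, Gaux, Real.rpow_def_of_pos h1, Real.rpow_def_of_pos h2,
    Real.rpow_def_of_pos h3, Real.rpow_def_of_pos h4,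
    ← Real.exp_add, ← Real.exp_add, ← Real.exp_sub]
  ring_nf

theorem F_diag_monotone (z : ℝ) (hz : z ∈ Set.Ioo (-1 : ℝ) 1) :
    StrictMonoOn (fun x => F x x z) (Set.Ioo (-1 : ℝ) z) ∧
    StrictAntiOn (fun x => F x x z) (Set.Ioo z 1) := by
  have hsub1 : Set.Ioo (-1 : ℝ) z ⊆ Set.Ioo (-1 : ℝ) 1 := by
    intro x hx; exact ⟨hx.1, lt_trans hx.2 hz.2⟩
  have hsub2 : Set.Ioo z (1 : ℝ) ⊆ Set.Ioo (-1 : ℝ) 1 := by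
    intro x hx; exact ⟨lt_trans hz.1 hx.1, hx.2⟩
  have hmono : StrictMonoOn (Gaux z) (Set.Ioo (-1 : ℝ) z) := by
    apply StrictMonoOn.mono (s := Set.Ioc (-1 : ℝ) z) ?_ Set.Ioo_subset_Ioc_self
    apply strictMonoOn_of_hasDerivWithinAt_pos (convex_Ioc _ _)
      (f' := fun x => Real.log (1 + z) - Real.log (1 - z) - Real.log (1 + x) + Real.log (1 - x))
    · intro x hx
      have hx' : x ∈ Set.Ioo (-1 : ℝ) 1 := ⟨hx.1, lt_of_le_of_lt hx.2 hz.2⟩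
      exact (Gaux_hasDerivAt z x hx').continuousAt.continuousWithinAt
    · intro x hx
      rw [interior_Ioc] at hx
      exact ((Gaux_hasDerivAt z x (hsub1 hx)).hasDerivWithinAt)
    · intro x hx
      rw [interior_Ioc] at hx
      have h1 : Real.log (1 + x) < Real.log (1 + z) :=
        Real.log_lt_log (by linarith [hx.1]) (by linarith [hx.2])
      have h2 : Real.log (1 - z) < Real.log (1 - x) :=
        Real.log_lt_log (by linarith [hz.2]) (by linarith [hx.2])
      linarith
  have hanti : StrictAntiOn (Gaux z) (Set.Ioo z (1 : ℝ)) := by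
    apply StrictAntiOn.mono (s := Set.Ico z (1 : ℝ)) ?_ Set.Ioo_subset_Ico_self
    apply strictAntiOn_of_hasDerivWithinAt_neg (convex_Ico _ _)
      (f' := fun x => Real.log (1 + z) - Real.log (1 - z) - Real.log (1 + x) + Real.log (1 - x))
    · intro x hx
      have hx' : x ∈ Set.Ioo (-1 : ℝ) 1 := ⟨lt_of_lt_of_le hz.1 hx.1, hx.2⟩
      exact (Gaux_hasDerivAt z x hx').continuousAt.continuousWithinAt
    · intro x hx
      rw [interior_Ico] at hx
      exact ((Gaux_hasDerivAt z x (hsub2 hx)).hasDerivWithinAt)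
    · intro x hx
      rw [interior_Ico] at hx
      have h1 : Real.log (1 + z) < Real.log (1 + x) :=
        Real.log_lt_log (by linarith [hz.1]) (by linarith [hx.1])
      have h2 : Real.log (1 - x) < Real.log (1 - z) :=
        Real.log_lt_log (by linarith [hx.2]) (by linarith [hx.1])
      linarith
  constructor
  · intro a ha b hb hab
    show F a a z < F b b z
    rw [F_diag_eq z a (hsub1 ha) hz, F_diag_eq z b (hsub1 hb) hz]
    exact Real.exp_lt_exp.mpr (hmono ha hb hab)
  · intro a ha b hb hab
    show F b b z < F a a z
    rw [F_diag_eq z a (hsub2 ha) hz, F_diag_eq z b (hsub2 hb) hz]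
    exact Real.exp_lt_exp.mpr (hanti ha hb hab)
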